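/- For any n ∈ ℕ and t ∈ [0,T], the tail sum over ℓ ≥ n+1 and j = 1,...,2^n of E_{2^{ℓ-1}+j}(t)^2 + ∫_0^t E_{2^{ℓ-1}+j}(τ)^2 dτ is bounded above by 2T(1+t)·2^{-n}. -/

import Mathlib

open MeasureTheory Set

lemma haar_ind_int (a m t : ℝ) (ha : 0 ≤ a) (ham : a ≤ m) (ht : 0 ≤ t) :
    ∫ s in (0:ℝ)..t, (Set.Icc a m).indicator (fun _ => (1:ℝ)) s = min t m - min t a := by
  rw [intervalIntegral.integral_of_le ht, MeasureTheory.setIntegral_indicator measurableSet_Icc]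
  simp only [MeasureTheory.setIntegral_const, smul_eq_mul, mul_one]
  have hvol : volume (Set.Ioc 0 t ∩ Set.Icc a m) = ENNReal.ofReal (min t m - a) := by
    apply le_antisymm
    · have : Set.Ioc 0 t ∩ Set.Icc a m ⊆ Set.Icc a (min t m) := by
        rintro x ⟨⟨hx0, hxt⟩, hxa, hxm⟩
        exact ⟨hxa, le_min hxt hxm⟩
      calc volume (Set.Ioc 0 t ∩ Set.Icc a m) ≤ volume (Set.Icc a (min t m)) :=
            measure_mono this
        _ = ENNReal.ofReal (min t m - a) := Real.volume_Icc
    · have : Set.Ioc a (min t m) ⊆ Set.Ioc 0 t ∩ Set.Icc a m := by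
        rintro x ⟨hxa, hxm⟩
        exact ⟨⟨lt_of_le_of_lt ha hxa, hxm.trans (min_le_left _ _)⟩,
          le_of_lt hxa, hxm.trans (min_le_right _ _)⟩
      calc ENNReal.ofReal (min t m - a) = volume (Set.Ioc a (min t m)) :=
            Real.volume_Ioc.symm
        _ ≤ volume (Set.Ioc 0 t ∩ Set.Icc a m) := measure_mono this
  rw [measureReal_def, hvol]
  rcases le_total t a with h | h
  · rw [min_eq_left h, min_eq_left (h.trans ham)]
    rw [ENNReal.ofReal_eq_zero.2 (by linarith : t - a ≤ 0)]
    simp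
  · rw [min_eq_right h, ENNReal.toReal_ofReal (by have := le_min h ham; linarith [min_le_left t m, min_le_right t m, le_min_iff.1 (le_refl (min t m))])]

lemma haar_formula (c a m b t : ℝ) (ha : 0 ≤ a) (ham : a ≤ m) (hmb : m ≤ b) (ht : 0 ≤ t) :
    ∫ s in (0:ℝ)..t, c * ((Set.Icc a m).indicator (fun _ => (1:ℝ)) s
        - (Set.Icc m b).indicator (fun _ => (1:ℝ)) s)
      = c * ((min t m - min t a) - (min t b - min t m)) := by
  have hint : ∀ x y : ℝ, IntervalIntegrable ((Set.Icc x y).indicator fun _ => (1:ℝ)) volume 0 t := by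
    intro x y
    apply MeasureTheory.Integrable.intervalIntegrable
    rw [MeasureTheory.integrable_indicator_iff measurableSet_Icc]
    exact integrableOn_const measure_Icc_lt_top.ne
  rw [intervalIntegral.integral_const_mul, intervalIntegral.integral_sub (hint _ _) (hint _ _),
    haar_ind_int a m t ha ham ht, haar_ind_int m b t (ha.trans ham) hmb ht]

section Haar
variable (T : ℝ) (hT : 0 < T) (E : ℕ → ℕ → ℝ → ℝ)
  (hE : ∀ ℓ j t, E ℓ j t = ∫ s in (0:ℝ)..t,
      Real.sqrt ((2:ℝ) ^ (ℓ - 1) / T) *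
        ((Set.Icc (T * (2 * (j:ℝ) - 2) / 2 ^ ℓ) (T * (2 * (j:ℝ) - 1) / 2 ^ ℓ)).indicator
            (fun _ => (1:ℝ)) s
          - (Set.Icc (T * (2 * (j:ℝ) - 1) / 2 ^ ℓ) (T * (2 * (j:ℝ)) / 2 ^ ℓ)).indicator
            (fun _ => (1:ℝ)) s))

include hT hE

lemma haar_E_formula (ℓ j : ℕ) (hj : 1 ≤ j) (t : ℝ) (ht : 0 ≤ t) :
    E ℓ j t = Real.sqrt ((2:ℝ) ^ (ℓ - 1) / T) *
      ((min t (T * (2 * (j:ℝ) - 1) / 2 ^ ℓ) - min t (T * (2 * (j:ℝ) - 2) / 2 ^ ℓ))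
        - (min t (T * (2 * (j:ℝ)) / 2 ^ ℓ) - min t (T * (2 * (j:ℝ) - 1) / 2 ^ ℓ))) := by
  have hj1 : (1:ℝ) ≤ (j:ℝ) := by exact_mod_cast hj
  rw [hE]
  apply haar_formula
  · apply div_nonneg (mul_nonneg hT.le (by linarith)) (by positivity)
  · gcongr <;> first | exact hT.le | norm_num | linarith
  · gcongr <;> first | exact hT.le | norm_num | linarith
  · exact ht

lemma haar_E_sq_bound (ℓ j : ℕ) (hℓ : 1 ≤ ℓ) (hj : 1 ≤ j) (t : ℝ) (ht : 0 ≤ t) :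
    E ℓ j t ^ 2 ≤ T / 2 ^ (ℓ + 1) := by
  obtain ⟨l, rfl⟩ : ∃ l, ℓ = l + 1 := ⟨ℓ - 1, (Nat.succ_pred_eq_of_pos hℓ).symm⟩
  have hj1 : (1:ℝ) ≤ (j:ℝ) := by exact_mod_cast hj
  rw [haar_E_formula T hT E hE _ j hj t ht]
  set a := T * (2 * (j:ℝ) - 2) / 2 ^ (l+1) with hadef
  set m := T * (2 * (j:ℝ) - 1) / 2 ^ (l+1) with hmdef
  set b := T * (2 * (j:ℝ)) / 2 ^ (l+1) with hbdef
  have h2l : (0:ℝ) < 2 ^ (l+1) := by positivity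
  have hma : m - a = T / 2 ^ (l+1) := by rw [hadef, hmdef]; field_simp; ring
  have hbm : b - m = T / 2 ^ (l+1) := by rw [hbdef, hmdef]; field_simp; ring
  have ham : a ≤ m := by rw [← sub_nonneg, hma]; positivity
  have hmb : m ≤ b := by rw [← sub_nonneg, hbm]; positivity
  have hX0 : 0 ≤ min t m - min t a := by rcases le_total t a with h|h <;> rcases le_total t m with h2|h2 <;> simp only [min_eq_left, min_eq_right, h, h2] <;> linarith
  have hX1 : min t m - min t a ≤ m - a := by rcases le_total t a with h|h <;> rcases le_total t m with h2|h2 <;> simp only [min_eq_left, min_eq_right, h, h2] <;> linarith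
  have hY0 : 0 ≤ min t b - min t m := by rcases le_total t m with h|h <;> rcases le_total t b with h2|h2 <;> simp only [min_eq_left, min_eq_right, h, h2] <;> linarith
  have hY1 : min t b - min t m ≤ b - m := by rcases le_total t m with h|h <;> rcases le_total t b with h2|h2 <;> simp only [min_eq_left, min_eq_right, h, h2] <;> linarith
  have hc : (0:ℝ) ≤ (2:ℝ) ^ (l + 1 - 1) / T := by positivity
  rw [mul_pow, Real.sq_sqrt hc]
  have hsq : ((min t m - min t a) - (min t b - min t m)) ^ 2 ≤ (T / 2 ^ (l+1)) ^ 2 := by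
    apply sq_le_sq'
    · rw [← hbm]; linarith
    · rw [← hma]; linarith
  calc (2:ℝ) ^ (l + 1 - 1) / T * ((min t m - min t a) - (min t b - min t m)) ^ 2
      ≤ (2:ℝ) ^ (l + 1 - 1) / T * (T / 2 ^ (l+1)) ^ 2 := by
        apply mul_le_mul_of_nonneg_left hsq (by positivity)
    _ = T / 2 ^ (l + 1 + 1) := by
        simp only [Nat.add_sub_cancel]
        field_simp
        ring
  
lemma haar_E_vanish (ℓ j : ℕ) (hj : 1 ≤ j) (t : ℝ) (ht : 0 ≤ t)
    (h : t ≤ T * (2 * (j:ℝ) - 2) / 2 ^ ℓ ∨ T * (2 * (j:ℝ)) / 2 ^ ℓ ≤ t) :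
    E ℓ j t = 0 := by
  have hj1 : (1:ℝ) ≤ (j:ℝ) := by exact_mod_cast hj
  have h2l : (0:ℝ) < 2 ^ ℓ := by positivity
  have ham : T * (2 * (j:ℝ) - 2) / 2 ^ ℓ ≤ T * (2 * (j:ℝ) - 1) / 2 ^ ℓ := by
    gcongr <;> first | exact hT.le | norm_num | linarith
  have hmb : T * (2 * (j:ℝ) - 1) / 2 ^ ℓ ≤ T * (2 * (j:ℝ)) / 2 ^ ℓ := by
    gcongr <;> first | exact hT.le | norm_num | linarith
  rw [haar_E_formula T hT E hE ℓ j hj t ht]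
  rcases h with h | h
  · rw [min_eq_left h, min_eq_left (h.trans ham), min_eq_left ((h.trans ham).trans hmb)]
    ring
  · rw [min_eq_right ((ham.trans hmb).trans h), min_eq_right (hmb.trans h), min_eq_right h]
    field_simp
    ring

end Haar

section Haar2
variable (T : ℝ) (hT : 0 < T) (E : ℕ → ℕ → ℝ → ℝ)
  (hE : ∀ ℓ j t, E ℓ j t = ∫ s in (0:ℝ)..t,
      Real.sqrt ((2:ℝ) ^ (ℓ - 1) / T) *
        ((Set.Icc (T * (2 * (j:ℝ) - 2) / 2 ^ ℓ) (T * (2 * (j:ℝ) - 1) / 2 ^ ℓ)).indicator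
            (fun _ => (1:ℝ)) s
          - (Set.Icc (T * (2 * (j:ℝ) - 1) / 2 ^ ℓ) (T * (2 * (j:ℝ)) / 2 ^ ℓ)).indicator
            (fun _ => (1:ℝ)) s))

include hT hE

lemma haar_E_pair (ℓ j j' : ℕ) (hj : 1 ≤ j) (hjj : j < j') (t : ℝ) (ht : 0 ≤ t) :
    E ℓ j t = 0 ∨ E ℓ j' t = 0 := by
  have hcast : ((j:ℝ) + 1) ≤ (j':ℝ) := by exact_mod_cast hjj
  have h2l : (0:ℝ) < 2 ^ ℓ := by positivity
  rcases le_total t (T * (2 * (j':ℝ) - 2) / 2 ^ ℓ) with h | h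
  · exact Or.inr (haar_E_vanish T hT E hE ℓ j' (hj.trans hjj.le) t ht (Or.inl h))
  · refine Or.inl (haar_E_vanish T hT E hE ℓ j hj t ht (Or.inr ?_))
    refine le_trans ?_ h
    gcongr T * ?_ / 2 ^ ℓ
    linarith

lemma haar_level_sum_bound (n k : ℕ) (t : ℝ) (ht : 0 ≤ t) :
    ∑ j ∈ Finset.Icc 1 (2 ^ n), E (n + 1 + k) j t ^ 2 ≤ T / 2 ^ (n + k + 2) := by
  have hbd : (0:ℝ) ≤ T / 2 ^ (n + k + 2) := by positivity
  have hbd2 : ∀ j : ℕ, 1 ≤ j → E (n + 1 + k) j t ^ 2 ≤ T / 2 ^ (n + k + 2) := by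
    intro j hj
    have := haar_E_sq_bound T hT E hE (n + 1 + k) j (by omega) hj t ht
    have heq : n + 1 + k + 1 = n + k + 2 := by omega
    rwa [heq] at this
  by_cases hall : ∀ j ∈ Finset.Icc 1 (2 ^ n), E (n + 1 + k) j t = 0
  · have hz : ∑ j ∈ Finset.Icc 1 (2 ^ n), E (n + 1 + k) j t ^ 2 = 0 :=
      Finset.sum_eq_zero (fun j hj => by simp [hall j hj])
    rw [hz]; exact hbd
  · push_neg at hall
    obtain ⟨j0, hj0mem, hj0⟩ := hall
    have hj01 : 1 ≤ j0 := (Finset.mem_Icc.1 hj0mem).1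
    rw [Finset.sum_eq_single_of_mem j0 hj0mem]
    · exact hbd2 j0 hj01
    · intro j hjmem hne
      have hj1 : 1 ≤ j := (Finset.mem_Icc.1 hjmem).1
      rcases lt_or_gt_of_ne hne with h | h
      · rcases haar_E_pair T hT E hE (n + 1 + k) j j0 hj1 h t ht with h0 | h0
        · simp [h0]
        · exact absurd h0 hj0
      · rcases haar_E_pair T hT E hE (n + 1 + k) j0 j hj01 h t ht with h0 | h0
        · exact absurd h0 hj0
        · simp [h0]

end Haar2

/-- tail bound for the antiderivatives of the Haar basis functions. -/
theorem haar_antiderivative_tail_bound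
    (T : ℝ) (hT : 0 < T)
    (E : ℕ → ℕ → ℝ → ℝ)
    (hE : ∀ ℓ j t, E ℓ j t = ∫ s in (0:ℝ)..t,
      Real.sqrt ((2:ℝ) ^ (ℓ - 1) / T) *
        ((Set.Icc (T * (2 * (j:ℝ) - 2) / 2 ^ ℓ) (T * (2 * (j:ℝ) - 1) / 2 ^ ℓ)).indicator
            (fun _ => (1:ℝ)) s
          - (Set.Icc (T * (2 * (j:ℝ) - 1) / 2 ^ ℓ) (T * (2 * (j:ℝ)) / 2 ^ ℓ)).indicator
            (fun _ => (1:ℝ)) s)) :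
    ∀ n : ℕ, ∀ t ∈ Set.Icc (0:ℝ) T,
      ∑' k : ℕ, ∑ j ∈ Finset.Icc 1 (2 ^ n),
        ((E (n + 1 + k) j t) ^ 2 + ∫ τ in (0:ℝ)..t, (E (n + 1 + k) j τ) ^ 2)
      ≤ 2 * T * (1 + t) / 2 ^ n := by
  intro n t ⟨ht0, htT⟩
  set f : ℕ → ℝ := fun k => ∑ j ∈ Finset.Icc 1 (2 ^ n),
      ((E (n + 1 + k) j t) ^ 2 + ∫ τ in (0:ℝ)..t, (E (n + 1 + k) j τ) ^ 2) with hf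
  -- the explicit continuous version of E at level n+1+k
  have key : ∀ k : ℕ, f k ≤ ((1 + t) * (T / 2 ^ (n + 2))) * (1 / 2) ^ k ∧ 0 ≤ f k := by
    intro k
    set G : ℕ → ℝ → ℝ := fun j τ => Real.sqrt ((2:ℝ) ^ (n + 1 + k - 1) / T) *
        ((min τ (T * (2 * (j:ℝ) - 1) / 2 ^ (n + 1 + k)) - min τ (T * (2 * (j:ℝ) - 2) / 2 ^ (n + 1 + k)))
          - (min τ (T * (2 * (j:ℝ)) / 2 ^ (n + 1 + k)) - min τ (T * (2 * (j:ℝ) - 1) / 2 ^ (n + 1 + k)))) with hG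
    have hGcont : ∀ j : ℕ, Continuous (fun τ => G j τ ^ 2) := by
      intro j
      apply Continuous.pow
      exact continuous_const.mul ((((continuous_id.min continuous_const).sub
        (continuous_id.min continuous_const))).sub
        (((continuous_id.min continuous_const)).sub (continuous_id.min continuous_const)))
    have hEG : ∀ j : ℕ, 1 ≤ j → ∀ τ : ℝ, 0 ≤ τ → E (n + 1 + k) j τ = G j τ := by
      intro j hj τ hτ
      exact haar_E_formula T hT E hE (n + 1 + k) j hj τ hτ
    have hintEG : ∀ j ∈ Finset.Icc 1 (2 ^ n),
        (∫ τ in (0:ℝ)..t, (E (n + 1 + k) j τ) ^ 2) = ∫ τ in (0:ℝ)..t, G j τ ^ 2 := by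
      intro j hj
      apply intervalIntegral.integral_congr
      intro τ hτ
      rw [Set.uIcc_of_le ht0] at hτ
      show E (n + 1 + k) j τ ^ 2 = G j τ ^ 2
      rw [hEG j (Finset.mem_Icc.1 hj).1 τ hτ.1]
    constructor
    · have hsum1 : ∑ j ∈ Finset.Icc 1 (2 ^ n), E (n + 1 + k) j t ^ 2 ≤ T / 2 ^ (n + k + 2) :=
        haar_level_sum_bound T hT E hE n k t ht0
      have hsum2 : ∑ j ∈ Finset.Icc 1 (2 ^ n), (∫ τ in (0:ℝ)..t, (E (n + 1 + k) j τ) ^ 2)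
          ≤ t * (T / 2 ^ (n + k + 2)) := by
        rw [Finset.sum_congr rfl hintEG]
        rw [← intervalIntegral.integral_finset_sum
          (fun j _ => (hGcont j).intervalIntegrable 0 t)]
        calc (∫ τ in (0:ℝ)..t, ∑ j ∈ Finset.Icc 1 (2 ^ n), G j τ ^ 2)
            ≤ ∫ τ in (0:ℝ)..t, (T / 2 ^ (n + k + 2)) := by
              apply intervalIntegral.integral_mono_on ht0
              · exact (continuous_finset_sum _ (fun j _ => hGcont j)).intervalIntegrable 0 t
              · exact intervalIntegrable_const
              · intro τ hτ
                have : ∑ j ∈ Finset.Icc 1 (2 ^ n), G j τ ^ 2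
                    = ∑ j ∈ Finset.Icc 1 (2 ^ n), E (n + 1 + k) j τ ^ 2 :=
                  Finset.sum_congr rfl (fun j hj => by
                    rw [hEG j (Finset.mem_Icc.1 hj).1 τ hτ.1])
                rw [this]
                exact haar_level_sum_bound T hT E hE n k τ hτ.1
          _ = t * (T / 2 ^ (n + k + 2)) := by simp [mul_div_assoc]
      have heq : T / 2 ^ (n + k + 2) + t * (T / 2 ^ (n + k + 2))
          = ((1 + t) * (T / 2 ^ (n + 2))) * (1 / 2) ^ k := by
        rw [pow_add, pow_add]
        field_simp
        have h2k : (1/2:ℝ)^k * 2^k = 1 := by rw [← mul_pow]; norm_num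
        linear_combination (-(2:ℝ)^n*4) * h2k
      have hsplit : f k = (∑ j ∈ Finset.Icc 1 (2 ^ n), E (n + 1 + k) j t ^ 2)
          + ∑ j ∈ Finset.Icc 1 (2 ^ n), (∫ τ in (0:ℝ)..t, (E (n + 1 + k) j τ) ^ 2) :=
        Finset.sum_add_distrib
      rw [hsplit]
      calc (∑ j ∈ Finset.Icc 1 (2 ^ n), E (n + 1 + k) j t ^ 2)
            + ∑ j ∈ Finset.Icc 1 (2 ^ n), (∫ τ in (0:ℝ)..t, (E (n + 1 + k) j τ) ^ 2)
          ≤ T / 2 ^ (n + k + 2) + t * (T / 2 ^ (n + k + 2)) := add_le_add hsum1 hsum2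
        _ = ((1 + t) * (T / 2 ^ (n + 2))) * (1 / 2) ^ k := heq
    · apply Finset.sum_nonneg
      intro j hj
      have h1 : (0:ℝ) ≤ ∫ τ in (0:ℝ)..t, (E (n + 1 + k) j τ) ^ 2 := by
        rw [hintEG j hj]
        exact intervalIntegral.integral_nonneg ht0 (fun τ _ => sq_nonneg _)
      positivity
  have hgsum : Summable (fun k : ℕ => ((1 + t) * (T / 2 ^ (n + 2))) * (1 / 2 : ℝ) ^ k) :=
    (summable_geometric_of_lt_one (by norm_num) (by norm_num)).mul_left _
  have hfsum : Summable f :=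
    Summable.of_nonneg_of_le (fun k => (key k).2) (fun k => (key k).1) hgsum
  calc ∑' k, f k ≤ ∑' k, ((1 + t) * (T / 2 ^ (n + 2))) * (1 / 2 : ℝ) ^ k :=
        Summable.tsum_le_tsum (fun k => (key k).1) hfsum hgsum
    _ = ((1 + t) * (T / 2 ^ (n + 2))) * 2 := by
        rw [tsum_mul_left, tsum_geometric_of_lt_one (by norm_num) (by norm_num)]
        norm_num
    _ ≤ 2 * T * (1 + t) / 2 ^ n := by
        have h2n : (0:ℝ) < 2 ^ n := by positivity
        have hx : (0:ℝ) ≤ (1 + t) * T := mul_nonneg (by linarith) hT.le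
        rw [pow_add]
        have hrw : (1 + t) * (T / (2 ^ n * 2 ^ 2)) * 2 = ((1 + t) * T) / (2 * 2 ^ n) := by
          field_simp
        rw [hrw, div_le_div_iff₀ (by positivity) h2n]
        nlinarith [mul_nonneg hx h2n.le]
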